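/- arXiv:1410.4708 — 3 statements merged into one kernel-verified Lean document; each statement's English description precedes it below -/
import Mathlib

section
/- Let δ₁ : ℤ⁸ → ℤ⁸ be given by the integer matrix whose rows are (0,0,0,0,0,0,0,0), (0,0,0,0,0,0,0,0), (0,−1,1,0,0,1,−1,0), (0,1,−1,0,0,−1,1,0), (1,0,0,−1,0,0,0,0), (−1,0,0,1,0,0,0,0), (0,0,0,0,−1,0,0,1), (0,0,0,0,1,0,0,−1). Then the quotient ℤ⁸ / Im(δ₁) is a free abelian group of rank 5 (i.e., isomorphic to ℤ⁵). -/
private lemma cv5 {α : Type*} (x : α) (u : Fin 7 → α) : Matrix.vecCons x u 5 = u 4 := rfl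
private lemma cv6 {α : Type*} (x : α) (u : Fin 7 → α) : Matrix.vecCons x u 6 = u 5 := rfl
private lemma cv7 {α : Type*} (x : α) (u : Fin 7 → α) : Matrix.vecCons x u 7 = u 6 := rfl
private lemma cv5' {α : Type*} (x : α) (u : Fin 6 → α) : Matrix.vecCons x u 5 = u 4 := rfl
private lemma cv6' {α : Type*} (x : α) (u : Fin 6 → α) : Matrix.vecCons x u 6 = u 5 := rfl
private lemma cv5'' {α : Type*} (x : α) (u : Fin 5 → α) : Matrix.vecCons x u 5 = u 4 := rfl

set_option maxHeartbeats 2000000 in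
/-- the quotient `ℤ⁸ / Im(δ₁)` is a free abelian group of rank 5,
i.e. isomorphic to `ℤ⁵`. -/
theorem stmt8 :
    Nonempty (((Fin 8 → ℤ) ⧸ LinearMap.range
      ((!![0, 0, 0, 0, 0, 0, 0, 0;
           0, 0, 0, 0, 0, 0, 0, 0;
           0, -1, 1, 0, 0, 1, -1, 0;
           0, 1, -1, 0, 0, -1, 1, 0;
           1, 0, 0, -1, 0, 0, 0, 0;
           -1, 0, 0, 1, 0, 0, 0, 0;
           0, 0, 0, 0, -1, 0, 0, 1;
           0, 0, 0, 0, 1, 0, 0, -1] : Matrix (Fin 8) (Fin 8) ℤ).mulVecLin))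
      ≃ₗ[ℤ] (Fin 5 → ℤ)) := by
  set M : Matrix (Fin 8) (Fin 8) ℤ :=
    !![0, 0, 0, 0, 0, 0, 0, 0;
       0, 0, 0, 0, 0, 0, 0, 0;
       0, -1, 1, 0, 0, 1, -1, 0;
       0, 1, -1, 0, 0, -1, 1, 0;
       1, 0, 0, -1, 0, 0, 0, 0;
       -1, 0, 0, 1, 0, 0, 0, 0;
       0, 0, 0, 0, -1, 0, 0, 1;
       0, 0, 0, 0, 1, 0, 0, -1] with hM
  set A : Matrix (Fin 5) (Fin 8) ℤ :=
    !![1,0,0,0,0,0,0,0;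
       0,1,0,0,0,0,0,0;
       0,0,1,1,0,0,0,0;
       0,0,0,0,1,1,0,0;
       0,0,0,0,0,0,1,1] with hA
  have hAM : A * M = 0 := by
    ext i j
    fin_cases i <;> fin_cases j <;>
      simp [hA, hM, Matrix.mul_apply, Fin.sum_univ_eight, cv5, cv6, cv7, cv5', cv6', cv5'', Matrix.vecHead, Matrix.vecTail]
  have hker : LinearMap.range M.mulVecLin = LinearMap.ker A.mulVecLin := by
    apply le_antisymm
    · rintro x ⟨v, rfl⟩
      show A.mulVec (M.mulVec v) = 0
      rw [Matrix.mulVec_mulVec, hAM, Matrix.zero_mulVec]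
    · intro x hx
      have hx' : A.mulVec x = 0 := hx
      have h0 := congrFun hx' 0
      have h1 := congrFun hx' 1
      have h2 := congrFun hx' 2
      have h3 := congrFun hx' 3
      have h4 := congrFun hx' 4
      simp [hA, Matrix.mulVec, dotProduct, Fin.sum_univ_eight, cv5, cv6, cv7, cv5', cv6', cv5'', Matrix.vecHead, Matrix.vecTail] at h0 h1 h2 h3 h4
      refine ⟨![x 4, 0, x 2, 0, -(x 6), 0, 0, 0], ?_⟩
      show M.mulVec _ = x
      funext i
      fin_cases i <;>
        simp [hM, Matrix.mulVec, dotProduct, Fin.sum_univ_eight, cv5, cv6, cv7, cv5', cv6', cv5'', Matrix.vecHead, Matrix.vecTail] <;>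
        linarith
  have hsurj : Function.Surjective A.mulVecLin := by
    intro y
    refine ⟨![y 0, y 1, y 2, 0, y 3, 0, y 4, 0], ?_⟩
    show A.mulVec _ = y
    funext i
    fin_cases i <;>
      simp [hA, Matrix.mulVec, dotProduct, Fin.sum_univ_eight, cv5, cv6, cv7, cv5', cv6', cv5'', Matrix.vecHead, Matrix.vecTail]
  exact ⟨(Submodule.quotEquivOfEq _ _ hker).trans
    (A.mulVecLin.quotKerEquivOfSurjective hsurj)⟩
end

section
/- Let A : ℤ⁴ → ℤ⁴ be the linear map given by the matrix [[2,1,0,0],[2,3,0,0],[0,−1,2,2],[1,0,1,3]]. Then the direct limit of the directed system ℤ⁴ → ℤ⁴ → ℤ⁴ → ⋯ with all maps equal to A is isomorphic (as an abelian group) to ℤ[1/4]² ⊕ ℤ². -/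
/-- `ℤ[1/k]`: the additive subgroup of `ℚ` of rationals whose denominator is a
power of `k`, i.e. the subgroup generated by the powers `(1/k)ⁿ`. -/
def zOneOver (k : ℕ) : AddSubgroup ℚ :=
  AddSubgroup.closure {q : ℚ | ∃ n : ℕ, q = ((k : ℚ) ^ n)⁻¹}

/-- The matrix `A₁*` acting on `ℤ⁴`. -/
def A9 : (Fin 4 → ℤ) →ₗ[ℤ] (Fin 4 → ℤ) :=
  (!![2, 1, 0, 0; 2, 3, 0, 0; 0, -1, 2, 2; 1, 0, 1, 3] :
    Matrix (Fin 4) (Fin 4) ℤ).mulVecLin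

/-- The directed system `ℤ⁴ → ℤ⁴ → ⋯` with every bonding map equal to `A₁*`. -/
def f9 : ∀ i j : ℕ, i ≤ j → (Fin 4 → ℤ) →ₗ[ℤ] (Fin 4 → ℤ) :=
  fun i j _ => (A9 ^ (j - i) : Module.End ℤ (Fin 4 → ℤ))

/-! ### Auxiliary definitions -/

/-- `K n = (4^n - 1)/3`. -/
def Kaux : ℕ → ℤ
  | 0 => 0
  | n + 1 => 4 * Kaux n + 1

lemma Kaux_spec (n : ℕ) : 3 * Kaux n + 1 = 4 ^ n := by
  induction n with
  | zero => simp [Kaux]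
  | succ n ih => rw [Kaux, pow_succ]; linarith

/-- eigenvalue-1 coordinate functionals (rows of `3·P⁻¹`). -/
def cc3 (x : Fin 4 → ℤ) : ℤ := -x 0 - x 2 + x 3
def cc4 (x : Fin 4 → ℤ) : ℤ := x 1 + 2 * x 2 - 2 * x 3

/-- integer numerators of the eigenvalue-4 coordinates at stage `i`. -/
def ee1 (i : ℕ) (x : Fin 4 → ℤ) : ℤ := x 3 + Kaux i * cc3 x
def ee2 (i : ℕ) (x : Fin 4 → ℤ) : ℤ := x 2 + Kaux i * cc4 x

lemma mem_zOneOver4 (a : ℤ) (n : ℕ) : (a : ℚ) / 4 ^ n ∈ zOneOver 4 := by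
  have h : ((4 : ℚ) ^ n)⁻¹ ∈ zOneOver 4 :=
    AddSubgroup.subset_closure ⟨n, by norm_num⟩
  have := AddSubgroup.zsmul_mem _ h a
  simpa [div_eq_mul_inv, zsmul_eq_mul] using this

lemma zOneOver4_rep (q : ℚ) (hq : q ∈ zOneOver 4) :
    ∃ (a : ℤ) (n : ℕ), q = (a : ℚ) / 4 ^ n := by
  refine AddSubgroup.closure_induction ?_ ?_ ?_ ?_ hq
  · rintro x ⟨n, rfl⟩
    exact ⟨1, n, by norm_num⟩
  · exact ⟨0, 0, by norm_num⟩
  · rintro x y - - ⟨a, n, rfl⟩ ⟨b, m, rfl⟩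
    refine ⟨a * 4 ^ m + b * 4 ^ n, n + m, ?_⟩
    rw [div_add_div _ _ (by positivity : (4:ℚ)^n ≠ 0) (by positivity : (4:ℚ)^m ≠ 0),
      pow_add]
    push_cast
    ring_nf
  · rintro x - ⟨a, n, rfl⟩
    exact ⟨-a, n, by push_cast; ring⟩

/-- The target module. -/
abbrev T9 : Type := (zOneOver 4 × zOneOver 4) × ℤ × ℤ

/-- The compatible family of maps. -/
def g9 (i : ℕ) : (Fin 4 → ℤ) →+ T9 :=
  AddMonoidHom.mk'
    (fun x => ((⟨(ee1 i x : ℚ) / 4 ^ i, mem_zOneOver4 _ _⟩,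
                ⟨(ee2 i x : ℚ) / 4 ^ i, mem_zOneOver4 _ _⟩),
               (cc3 x, cc4 x)))
    (by
      intro x y
      have h1 : ee1 i (x + y) = ee1 i x + ee1 i y := by
        simp [ee1, cc3, Pi.add_apply]; ring
      have h2 : ee2 i (x + y) = ee2 i x + ee2 i y := by
        simp [ee2, cc4, Pi.add_apply]; ring
      have h3 : cc3 (x + y) = cc3 x + cc3 y := by
        simp [cc3, Pi.add_apply]; ring
      have h4 : cc4 (x + y) = cc4 x + cc4 y := by
        simp [cc4, Pi.add_apply]; ring
      refine Prod.ext (Prod.ext ?_ ?_) (Prod.ext ?_ ?_) <;>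
        simp [h1, h2, h3, h4, Subtype.ext_iff, ← add_div]
      <;> push_cast <;> ring)

/-- component formulas for `A9`. -/
lemma A9_apply (x : Fin 4 → ℤ) :
    A9 x = ![2 * x 0 + x 1, 2 * x 0 + 3 * x 1, -x 1 + 2 * x 2 + 2 * x 3,
             x 0 + x 2 + 3 * x 3] := by
  funext j
  fin_cases j <;>
    simp [A9, Matrix.mulVecLin_apply, Matrix.mulVec, dotProduct,
      Fin.sum_univ_four] <;> ring

lemma g9_step (i : ℕ) (x : Fin 4 → ℤ) : g9 (i + 1) (A9 x) = g9 i x := by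
  have hc3 : cc3 (A9 x) = cc3 x := by simp [A9_apply, cc3]; ring
  have hc4 : cc4 (A9 x) = cc4 x := by simp [A9_apply, cc4]; ring
  have he1 : ee1 (i + 1) (A9 x) = 4 * ee1 i x := by
    simp [ee1, hc3, A9_apply, Kaux, cc3]; ring
  have he2 : ee2 (i + 1) (A9 x) = 4 * ee2 i x := by
    simp [ee2, hc4, A9_apply, Kaux, cc4]; ring
  have h4 : ((4 : ℚ) ^ i) ≠ 0 := by positivity
  refine Prod.ext (Prod.ext ?_ ?_) (Prod.ext ?_ ?_) <;>
    simp [g9, AddMonoidHom.mk'_apply, hc3, hc4, he1, he2, Subtype.ext_iff]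
  · push_cast
    rw [pow_succ]
    field_simp
  · push_cast
    rw [pow_succ]
    field_simp

/-- iterated compatibility. -/
lemma g9_pow (n i : ℕ) (x : Fin 4 → ℤ) :
    g9 (i + n) ((A9 ^ n : Module.End ℤ (Fin 4 → ℤ)) x) = g9 i x := by
  induction n with
  | zero => simp
  | succ n ih =>
      have : (A9 ^ (n + 1) : Module.End ℤ (Fin 4 → ℤ)) x =
          A9 ((A9 ^ n : Module.End ℤ (Fin 4 → ℤ)) x) := by
        rw [pow_succ']; rfl
      rw [this, show i + (n + 1) = (i + n) + 1 by ring, g9_step, ih]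

lemma g9_compat : ∀ (i j : ℕ) (hij : i ≤ j) (x : Fin 4 → ℤ),
    (g9 j).toIntLinearMap (f9 i j hij x) = (g9 i).toIntLinearMap x := by
  intro i j hij x
  obtain ⟨n, rfl⟩ : ∃ n, j = i + n := ⟨j - i, by omega⟩
  simp only [AddMonoidHom.coe_toIntLinearMap, f9]
  rw [show i + n - i = n by omega]
  exact g9_pow n i x

lemma g9_inj (i : ℕ) (x : Fin 4 → ℤ) (h : g9 i x = 0) : x = 0 := by
  have h3 : cc3 x = 0 := congrArg (fun t => t.2.1) h
  have h4 : cc4 x = 0 := congrArg (fun t => t.2.2) h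
  have h1q : (ee1 i x : ℚ) / 4 ^ i = 0 := congrArg (fun t => (t.1.1 : ℚ)) h
  have h2q : (ee2 i x : ℚ) / 4 ^ i = 0 := congrArg (fun t => (t.1.2 : ℚ)) h
  have h4i : ((4 : ℚ) ^ i) ≠ 0 := by positivity
  have h1 : ee1 i x = 0 := by
    have := (div_eq_zero_iff.mp h1q).resolve_right h4i
    exact_mod_cast this
  have h2 : ee2 i x = 0 := by
    have := (div_eq_zero_iff.mp h2q).resolve_right h4i
    exact_mod_cast this
  have hx3 : x 3 = 0 := by simpa [ee1, h3] using h1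
  have hx2 : x 2 = 0 := by simpa [ee2, h4] using h2
  have hx0 : x 0 = 0 := by simp [cc3, hx2, hx3] at h3; linarith
  have hx1 : x 1 = 0 := by simp [cc4, hx2, hx3] at h4; linarith
  funext j
  fin_cases j <;> simpa

lemma g9_surj_aux (a1 a2 m1 m2 : ℤ) (n : ℕ) :
    ∃ x : Fin 4 → ℤ, ee1 n x = a1 ∧ ee2 n x = a2 ∧ cc3 x = m1 ∧ cc4 x = m2 := by
  set k := Kaux n with hk
  refine ⟨![a1 - a2 - (k + 1) * m1 + k * m2, 2 * a1 - 2 * a2 - 2 * k * m1 + (2 * k + 1) * m2,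
    a2 - k * m2, a1 - k * m1], ?_, ?_, ?_, ?_⟩ <;>
    simp [ee1, ee2, cc3, cc4] <;> ring

/-- the direct limit of `ℤ⁴ →A ℤ⁴ →A ⋯` with
`A = [[2,1,0,0],[2,3,0,0],[0,−1,2,2],[1,0,1,3]]` is isomorphic as an abelian group
to `ℤ[1/4]² ⊕ ℤ²`. -/
theorem stmt9 :
    Nonempty ((Module.DirectLimit (fun _ : ℕ => Fin 4 → ℤ) f9) ≃+
      ((zOneOver 4 × zOneOver 4) × ℤ × ℤ)) := by
  classical
  set gl := fun i => (g9 i).toIntLinearMap with hgl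
  let L := Module.DirectLimit.lift ℤ ℕ (fun _ : ℕ => Fin 4 → ℤ) f9 gl g9_compat
  have hker : ∀ z, L z = 0 → z = 0 := by
    intro z hz
    obtain ⟨i, x, rfl⟩ := Module.DirectLimit.exists_of z
    rw [Module.DirectLimit.lift_of] at hz
    have hx : x = 0 := g9_inj i x hz
    rw [hx, map_zero]
  have hinj : Function.Injective L := by
    intro z w hzw
    have : L (z - w) = 0 := by rw [map_sub, hzw, sub_self]
    have := hker _ this
    exact sub_eq_zero.mp this
  have hsurj : Function.Surjective L := by
    rintro ⟨⟨q1, q2⟩, m1, m2⟩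
    obtain ⟨b1, n1, hb1⟩ := zOneOver4_rep q1 q1.2
    obtain ⟨b2, n2, hb2⟩ := zOneOver4_rep q2 q2.2
    -- common denominator n = n1 + n2
    set n := n1 + n2 with hn
    set a1 := b1 * 4 ^ n2 with ha1
    set a2 := b2 * 4 ^ n1 with ha2
    have hq1 : (q1 : ℚ) = (a1 : ℚ) / 4 ^ n := by
      rw [hb1, ha1, hn]; push_cast; rw [pow_add]; field_simp
    have hq2 : (q2 : ℚ) = (a2 : ℚ) / 4 ^ n := by
      rw [hb2, ha2, hn]; push_cast; rw [pow_add]; field_simp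
    obtain ⟨x, he1, he2, hc3, hc4⟩ := g9_surj_aux a1 a2 m1 m2 n
    refine ⟨Module.DirectLimit.of ℤ ℕ (fun _ : ℕ => Fin 4 → ℤ) f9 n x, ?_⟩
    rw [Module.DirectLimit.lift_of]
    show g9 n x = _
    refine Prod.ext (Prod.ext ?_ ?_) (Prod.ext ?_ ?_) <;>
      simp only [g9, AddMonoidHom.mk'_apply, Subtype.ext_iff]
    · rw [he1, hq1]
    · rw [he2, hq2]
    · exact hc3
    · exact hc4
  exact ⟨(LinearEquiv.ofBijective L ⟨hinj, hsurj⟩).toAddEquiv⟩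
end

section
/- Let A : ℤ⁵ → ℤ⁵ be given by the matrix [[4,1,2,2,0],[4,9,6,6,0],[4,3,6,2,0],[4,3,2,6,0],[0,0,0,0,0]]. Then the direct limit of the directed system ℤ⁵ → ℤ⁵ → ⋯ with all maps equal to A is isomorphic to ℤ[1/16] ⊕ ℤ[1/4]² ⊕ ℤ. -/
/-- The matrix `A₂*` acting on `ℤ⁵`. -/
def A10 : (Fin 5 → ℤ) →ₗ[ℤ] (Fin 5 → ℤ) :=
  (!![4, 1, 2, 2, 0; 4, 9, 6, 6, 0; 4, 3, 6, 2, 0; 4, 3, 2, 6, 0; 0, 0, 0, 0, 0] :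
    Matrix (Fin 5) (Fin 5) ℤ).mulVecLin

/-- The directed system `ℤ⁵ → ℤ⁵ → ⋯` with every bonding map equal to `A₂*`. -/
def f10 : ∀ i j : ℕ, i ≤ j → (Fin 5 → ℤ) →ₗ[ℤ] (Fin 5 → ℤ) :=
  fun i j _ => (A10 ^ (j - i) : Module.End ℤ (Fin 5 → ℤ))

/-! ### Auxiliary development

We realise the direct limit explicitly.  Writing `B` for the invertible (over `ℚ`)
top-left `4 × 4` block of `A₂*` and `B' = 256 B⁻¹` (an integer matrix), the maps
`x ↦ M B'ⁿ (pr x) / 256ⁿ` (where `M = [e₁; e₂; e₃; w₄]` and `w₄ = (4,1,-2,-2)` is the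
left `1`-eigenvector of `B`) assemble to an isomorphism from the direct limit to
`ℤ[1/16] × ℤ[1/4] × ℤ[1/4] × ℤ`. -/

private def Bm : Matrix (Fin 4) (Fin 4) ℤ := !![4,1,2,2; 4,9,6,6; 4,3,6,2; 4,3,2,6]

private def Bp : Matrix (Fin 4) (Fin 4) ℤ :=
  !![144,16,-48,-48; 64,64,-64,-64; -96,-32,96,32; -96,-32,32,96]

private lemma hBmBp : Bm * Bp = (256 : ℤ) • 1 := by
  ext i j
  fin_cases i <;> fin_cases j <;> decide

private lemma hBpBm : Bp * Bm = (256 : ℤ) • 1 := by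
  ext i j
  fin_cases i <;> fin_cases j <;> decide

private lemma powBmBp (n : ℕ) : Bm ^ n * Bp ^ n = ((256:ℤ) ^ n) • 1 := by
  induction n with
  | zero => simp
  | succ n ih =>
    rw [pow_succ Bm, pow_succ' Bp, mul_assoc, ← mul_assoc Bm, hBmBp,
      Matrix.smul_mul, one_mul, Matrix.mul_smul, ih, smul_smul]
    ring_nf

private lemma powBpBm (n : ℕ) : Bp ^ n * Bm ^ n = ((256:ℤ) ^ n) • 1 := by
  induction n with
  | zero => simp
  | succ n ih =>
    rw [pow_succ Bp, pow_succ' Bm, mul_assoc, ← mul_assoc Bp, hBpBm,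
      Matrix.smul_mul, one_mul, Matrix.mul_smul, ih, smul_smul]
    ring_nf

private def pr (x : Fin 5 → ℤ) : Fin 4 → ℤ := ![x 0, x 1, x 2, x 3]

private def ext5 (y : Fin 4 → ℤ) : Fin 5 → ℤ := ![y 0, y 1, y 2, y 3, 0]

private lemma pr_ext5 (y : Fin 4 → ℤ) : pr (ext5 y) = y := by
  funext i; fin_cases i <;> simp [pr, ext5]

private lemma pr_add (x y : Fin 5 → ℤ) : pr (x + y) = pr x + pr y := by
  funext i; fin_cases i <;> simp [pr]

private lemma pr_smul (c : ℤ) (x : Fin 5 → ℤ) : pr (c • x) = c • pr x := by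
  funext i; fin_cases i <;> simp [pr]

private lemma pr_A (x : Fin 5 → ℤ) : pr (A10 x) = Bm.mulVec (pr x) := by
  funext i
  fin_cases i <;>
    simp [A10, Bm, pr, Matrix.mulVecLin, Matrix.mulVec, dotProduct,
      Fin.sum_univ_five, Fin.sum_univ_four]

/-- Pairing with the left `1`-eigenvector `w₄ = (4,1,-2,-2)` of `B`. -/
private def w4d (y : Fin 4 → ℤ) : ℤ := 4*y 0 + y 1 - 2*y 2 - 2*y 3

private lemma w4d_Bm (y : Fin 4 → ℤ) : w4d (Bm.mulVec y) = w4d y := by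
  simp [w4d, Bm, Matrix.mulVec, dotProduct, Fin.sum_univ_four]
  ring

private lemma w4d_pow (n : ℕ) (y : Fin 4 → ℤ) : w4d ((Bm ^ n).mulVec y) = w4d y := by
  induction n with
  | zero => simp
  | succ n ih => rw [pow_succ', ← Matrix.mulVec_mulVec, w4d_Bm, ih]

private lemma w4d_smul (c : ℤ) (y : Fin 4 → ℤ) : w4d (c • y) = c * w4d y := by
  simp [w4d]; ring

/-- On the kernel of `w₄`, the matrix `B` is divisible by `4`. -/
private lemma stepB (y : Fin 4 → ℤ) (h : w4d y = 0) :
    ∃ z, Bm.mulVec y = (4:ℤ) • z ∧ w4d z = 0 := by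
  refine ⟨![y 2 + y 3, -8*y 0+6*y 2+6*y 3, -2*y 0+3*y 2+2*y 3, -2*y 0+2*y 2+3*y 3], ?_, ?_⟩
  · funext i
    simp [w4d] at h
    fin_cases i <;>
      (simp [Bm, Matrix.mulVec, dotProduct, Fin.sum_univ_four]; omega)
  · simp [w4d]; ring

private lemma mem_zOneOver (k : ℕ) (p : ℤ) (n : ℕ) : (p : ℚ) / (k:ℚ)^n ∈ zOneOver k := by
  have h : (p:ℚ)/(k:ℚ)^n = p • ((k:ℚ)^n)⁻¹ := by
    rw [zsmul_eq_mul, div_eq_mul_inv]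
  rw [h]
  refine AddSubgroup.zsmul_mem _ (AddSubgroup.subset_closure ?_) p
  exact ⟨n, rfl⟩

private lemma zOneOver_rep {k : ℕ} (hk : (k:ℚ) ≠ 0) {q : ℚ} (hq : q ∈ zOneOver k) :
    ∃ (p : ℤ) (n : ℕ), q = (p : ℚ) / (k:ℚ)^n := by
  induction hq using AddSubgroup.closure_induction with
  | mem x hx =>
    obtain ⟨n, rfl⟩ := hx
    exact ⟨1, n, by simp⟩
  | zero => exact ⟨0, 0, by simp⟩
  | add a b _ _ iha ihb =>
    obtain ⟨p1, n1, rfl⟩ := iha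
    obtain ⟨p2, n2, rfl⟩ := ihb
    refine ⟨p1 * k ^ n2 + p2 * k ^ n1, n1 + n2, ?_⟩
    rw [div_add_div _ _ (pow_ne_zero n1 hk) (pow_ne_zero n2 hk), pow_add]
    push_cast
    ring
  | neg a _ iha =>
    obtain ⟨p, n, rfl⟩ := iha
    exact ⟨-p, n, by push_cast; ring⟩

/-- The target group. -/
private abbrev T10 := ↥(zOneOver 16) × (↥(zOneOver 4) × ↥(zOneOver 4)) × ℤ

/-- The compatible system of maps from the levels to the target group. -/
private noncomputable def g (n : ℕ) : (Fin 5 → ℤ) →+ T10 :=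
  AddMonoidHom.mk' (fun x =>
    (⟨((Bp^n).mulVec (pr x) 0 : ℚ) / (16:ℚ)^(2*n), mem_zOneOver 16 _ _⟩,
     (⟨((Bp^n).mulVec (pr x) 1 : ℚ) / (4:ℚ)^(4*n), mem_zOneOver 4 _ _⟩,
      ⟨((Bp^n).mulVec (pr x) 2 : ℚ) / (4:ℚ)^(4*n), mem_zOneOver 4 _ _⟩),
     w4d (pr x)))
    (by
      intro x y
      have h : pr (x + y) = pr x + pr y := pr_add x y
      refine Prod.ext ?_ (Prod.ext (Prod.ext ?_ ?_) ?_) <;>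
        simp [h, Matrix.mulVec_add, w4d, ← add_div] <;> ring)

private lemma key_num (n : ℕ) (x : Fin 5 → ℤ) :
    (Bp^(n+1)).mulVec (pr (A10 x)) = (256:ℤ) • ((Bp^n).mulVec (pr x)) := by
  rw [pr_A, Matrix.mulVec_mulVec, pow_succ, mul_assoc, hBpBm, Matrix.mul_smul,
    mul_one, Matrix.smul_mulVec]

private lemma g_succ (n : ℕ) (x : Fin 5 → ℤ) : g (n+1) (A10 x) = g n x := by
  have hk := key_num n x
  refine Prod.ext ?_ (Prod.ext (Prod.ext ?_ ?_) ?_)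
  · apply Subtype.ext
    show (((Bp^(n+1)).mulVec (pr (A10 x)) 0 : ℤ) : ℚ) / (16:ℚ)^(2*(n+1))
      = (((Bp^n).mulVec (pr x) 0 : ℤ) : ℚ) / (16:ℚ)^(2*n)
    rw [hk, Pi.smul_apply, smul_eq_mul]
    push_cast
    rw [show 2*(n+1) = 2*n + 2 by ring, pow_add]
    field_simp
    ring
  · apply Subtype.ext
    show (((Bp^(n+1)).mulVec (pr (A10 x)) 1 : ℤ) : ℚ) / (4:ℚ)^(4*(n+1))
      = (((Bp^n).mulVec (pr x) 1 : ℤ) : ℚ) / (4:ℚ)^(4*n)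
    rw [hk, Pi.smul_apply, smul_eq_mul]
    push_cast
    rw [show 4*(n+1) = 4*n + 4 by ring, pow_add]
    field_simp
    ring
  · apply Subtype.ext
    show (((Bp^(n+1)).mulVec (pr (A10 x)) 2 : ℤ) : ℚ) / (4:ℚ)^(4*(n+1))
      = (((Bp^n).mulVec (pr x) 2 : ℤ) : ℚ) / (4:ℚ)^(4*n)
    rw [hk, Pi.smul_apply, smul_eq_mul]
    push_cast
    rw [show 4*(n+1) = 4*n + 4 by ring, pow_add]
    field_simp
    ring
  · show w4d (pr (A10 x)) = w4d (pr x)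
    rw [pr_A, w4d_Bm]

private lemma g_pow (d n : ℕ) (x : Fin 5 → ℤ) :
    g (n + d) (((A10 ^ d : Module.End ℤ (Fin 5 → ℤ))) x) = g n x := by
  induction d generalizing n x with
  | zero => simp
  | succ d ih =>
    have h1 : ((A10 ^ (d+1) : Module.End ℤ (Fin 5 → ℤ))) x
        = (A10 ^ d : Module.End ℤ (Fin 5 → ℤ)) (A10 x) := by
      rw [pow_succ]; rfl
    rw [h1, show n + (d+1) = (n+1) + d by ring, ih (n+1) (A10 x), g_succ]

private lemma Hg : ∀ (i j : ℕ) (hij : i ≤ j) (x : Fin 5 → ℤ),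
    g j ((f10 i j hij) x) = g i x := by
  intro i j hij x
  obtain ⟨d, rfl⟩ : ∃ d, j = i + d := ⟨j - i, by omega⟩
  show g (i + d) ((A10 ^ (i + d - i) : Module.End ℤ (Fin 5 → ℤ)) x) = g i x
  rw [show i + d - i = d by omega]
  exact g_pow d i x

/-- The candidate isomorphism, as a linear map out of the direct limit. -/
private noncomputable def Phi :
    Module.DirectLimit (fun _ : ℕ => Fin 5 → ℤ) f10 →ₗ[ℤ] T10 :=
  Module.DirectLimit.lift ℤ ℕ (fun _ : ℕ => Fin 5 → ℤ) f10
    (fun n => (g n).toIntLinearMap) Hg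

private lemma phi_zero {z : Module.DirectLimit (fun _ : ℕ => Fin 5 → ℤ) f10}
    (hz : Phi z = 0) : z = 0 := by
  obtain ⟨n, x, rfl⟩ := Module.DirectLimit.exists_of z
  have h : g n x = 0 := by
    have := hz
    exact (Module.DirectLimit.lift_of (g := fun n => (g n).toIntLinearMap) (Hg := Hg) x).symm.trans this
  set y := (Bp^n).mulVec (pr x) with hy
  have h0 : ((y 0 : ℤ) : ℚ) / (16:ℚ)^(2*n) = 0 := congrArg (fun t : T10 => (t.1 : ℚ)) h
  have h1 : ((y 1 : ℤ) : ℚ) / (4:ℚ)^(4*n) = 0 := congrArg (fun t : T10 => (t.2.1.1 : ℚ)) h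
  have h2 : ((y 2 : ℤ) : ℚ) / (4:ℚ)^(4*n) = 0 := congrArg (fun t : T10 => (t.2.1.2 : ℚ)) h
  have h3 : w4d (pr x) = 0 := congrArg (fun t : T10 => t.2.2) h
  have e0 : y 0 = 0 := by
    have := (div_eq_zero_iff.mp h0).resolve_right (by positivity)
    exact_mod_cast this
  have e1 : y 1 = 0 := by
    have := (div_eq_zero_iff.mp h1).resolve_right (by positivity)
    exact_mod_cast this
  have e2 : y 2 = 0 := by
    have := (div_eq_zero_iff.mp h2).resolve_right (by positivity)
    exact_mod_cast this
  have hBy : (Bm^n).mulVec y = ((256:ℤ)^n) • pr x := by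
    rw [hy, Matrix.mulVec_mulVec, powBmBp, Matrix.smul_mulVec, Matrix.one_mulVec]
  have hw : w4d y = 0 := by
    have := w4d_pow n y
    rw [hBy, w4d_smul, h3, mul_zero] at this
    exact this.symm
  have e3 : y 3 = 0 := by
    simp [w4d, e0, e1, e2] at hw
    omega
  have hy0 : y = 0 := by
    funext i; fin_cases i <;> assumption
  have hpr : pr x = 0 := by
    have h256 : ((256:ℤ)^n) • pr x = 0 := by rw [← hBy, hy0, Matrix.mulVec_zero]
    funext i
    have h2a := congrFun h256 i
    rw [Pi.smul_apply, smul_eq_mul, Pi.zero_apply] at h2a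
    exact (mul_eq_zero.mp h2a).resolve_left (by positivity)
  have hx4 : x 0 = 0 ∧ x 1 = 0 ∧ x 2 = 0 ∧ x 3 = 0 :=
    ⟨congrFun hpr 0, congrFun hpr 1, congrFun hpr 2, congrFun hpr 3⟩
  have hAx : A10 x = 0 := by
    funext i
    fin_cases i <;>
      simp [A10, Matrix.mulVecLin, Matrix.mulVec, dotProduct, Fin.sum_univ_five,
        hx4.1, hx4.2.1, hx4.2.2.1, hx4.2.2.2]
  calc Module.DirectLimit.of ℤ ℕ (fun _ : ℕ => Fin 5 → ℤ) f10 n x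
      = Module.DirectLimit.of ℤ ℕ (fun _ : ℕ => Fin 5 → ℤ) f10 (n+1)
        (f10 n (n+1) (by omega) x) := (Module.DirectLimit.of_f).symm
    _ = 0 := by
        have : f10 n (n+1) (by omega) x = 0 := by
          show (A10 ^ (n+1-n) : Module.End ℤ (Fin 5 → ℤ)) x = 0
          rw [show n+1-n = 1 by omega, pow_one, hAx]
        rw [this, map_zero]

private def vv1 : Fin 4 → ℤ := ![1,0,0,2]
private def vv2 : Fin 4 → ℤ := ![0,2,0,1]
private def vv3 : Fin 4 → ℤ := ![0,0,1,-1]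

private lemma rec1 (n : ℕ) :
    ∃ y, (Bm^(2*n)).mulVec vv1 = ((16:ℤ)^n) • y ∧ w4d y = 0 := by
  induction n with
  | zero => exact ⟨vv1, by simp, by decide⟩
  | succ n ih =>
    obtain ⟨y, hy, hw⟩ := ih
    obtain ⟨z, hz, hwz⟩ := stepB y hw
    obtain ⟨z', hz', hwz'⟩ := stepB z hwz
    refine ⟨z', ?_, hwz'⟩
    rw [show 2*(n+1) = 1 + (1 + 2*n) by ring, pow_add, pow_add, pow_one,
      ← Matrix.mulVec_mulVec, ← Matrix.mulVec_mulVec, hy]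
    simp only [Matrix.mulVec_smul]
    rw [hz]
    simp only [Matrix.mulVec_smul]
    rw [hz', smul_smul, smul_smul]
    congr 1
    ring

private lemma rec2 (n : ℕ) :
    ∃ y, (Bm^(n+1)).mulVec vv2 = (2 * (4:ℤ)^n) • y ∧ w4d y = 0 := by
  induction n with
  | zero =>
    refine ⟨![2,12,4,6], ?_, by decide⟩
    rw [pow_one]
    funext i
    fin_cases i <;> decide
  | succ n ih =>
    obtain ⟨y, hy, hw⟩ := ih
    obtain ⟨z, hz, hwz⟩ := stepB y hw
    refine ⟨z, ?_, hwz⟩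
    rw [show n+1+1 = 1 + (n+1) by ring, pow_add, pow_one, ← Matrix.mulVec_mulVec, hy,
      Matrix.mulVec_smul, hz, smul_smul]
    congr 1
    ring

private lemma rec3 (n : ℕ) :
    ∃ y, (Bm^n).mulVec vv3 = ((4:ℤ)^n) • y ∧ w4d y = 0 := by
  induction n with
  | zero => exact ⟨vv3, by simp, by decide⟩
  | succ n ih =>
    obtain ⟨y, hy, hw⟩ := ih
    obtain ⟨z, hz, hwz⟩ := stepB y hw
    refine ⟨z, ?_, hwz⟩
    rw [show n+1 = 1 + n by ring, pow_add, pow_one, ← Matrix.mulVec_mulVec, hy,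
      Matrix.mulVec_smul, hz, smul_smul]
    congr 1
    ring

private lemma hE1 (p : ℤ) (n : ℕ) : ∃ s, Phi s =
    ((⟨(p:ℚ)/(16:ℚ)^n, mem_zOneOver 16 p n⟩ : ↥(zOneOver 16)), (0, 0), (0:ℤ)) := by
  obtain ⟨y, hy, hw⟩ := rec1 n
  refine ⟨Module.DirectLimit.of ℤ ℕ (fun _ : ℕ => Fin 5 → ℤ) f10 (2*n) (p • ext5 y), ?_⟩
  rw [Phi]; refine (Module.DirectLimit.lift_of (g := fun n => (g n).toIntLinearMap) (Hg := Hg) _).trans ?_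
  have hpr : pr (p • ext5 y) = p • y := by rw [pr_smul, pr_ext5]
  have key : ((16:ℤ)^n) • ((Bp^(2*n)).mulVec y) = ((256:ℤ)^(2*n)) • vv1 := by
    rw [← Matrix.mulVec_smul, ← hy, Matrix.mulVec_mulVec, powBpBm,
      Matrix.smul_mulVec, Matrix.one_mulVec]
  have keyc : ∀ i, ((Bp^(2*n)).mulVec y i : ℚ)
      = (256:ℚ)^(2*n) * (vv1 i : ℚ) / (16:ℚ)^n := by
    intro i
    have h1 : (16:ℤ)^n * ((Bp^(2*n)).mulVec y i) = (256:ℤ)^(2*n) * vv1 i := by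
      have := congrFun key i
      simpa [smul_eq_mul] using this
    have hq : ((16:ℚ)^n) ≠ 0 := by positivity
    rw [eq_div_iff hq]
    have := congrArg (fun t : ℤ => (t : ℚ)) h1
    push_cast at this
    linarith
  have h256 : (256:ℚ)^(2*n) = (16:ℚ)^(4*n) := by
    rw [show (256:ℚ) = 16^2 by norm_num, ← pow_mul]
    congr 1
    ring
  refine Prod.ext ?_ (Prod.ext (Prod.ext ?_ ?_) ?_)
  · apply Subtype.ext
    show ((Bp^(2*n)).mulVec (pr (p • ext5 y)) 0 : ℚ) / (16:ℚ)^(2*(2*n)) = (p:ℚ)/(16:ℚ)^n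
    rw [hpr, Matrix.mulVec_smul]
    have : ((p • (Bp^(2*n)).mulVec y) 0 : ℤ) = p * ((Bp^(2*n)).mulVec y 0) := by
      simp [smul_eq_mul]
    rw [this]
    push_cast
    rw [keyc 0, h256, show (2*(2*n)) = 4*n by ring, show ((vv1 0 : ℤ) : ℚ) = 1 by simp [vv1]]
    have h16 : ((16:ℚ)^(4*n)) ≠ 0 := by positivity
    have hn : ((16:ℚ)^n) ≠ 0 := by positivity
    field_simp
  · apply Subtype.ext
    show ((Bp^(2*n)).mulVec (pr (p • ext5 y)) 1 : ℚ) / (4:ℚ)^(4*(2*n)) = (0:ℚ)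
    rw [hpr, Matrix.mulVec_smul]
    have : ((p • (Bp^(2*n)).mulVec y) 1 : ℤ) = p * ((Bp^(2*n)).mulVec y 1) := by
      simp [smul_eq_mul]
    rw [this]
    push_cast
    rw [keyc 1, show ((vv1 1 : ℤ) : ℚ) = 0 by simp [vv1]]
    simp
  · apply Subtype.ext
    show ((Bp^(2*n)).mulVec (pr (p • ext5 y)) 2 : ℚ) / (4:ℚ)^(4*(2*n)) = (0:ℚ)
    rw [hpr, Matrix.mulVec_smul]
    have : ((p • (Bp^(2*n)).mulVec y) 2 : ℤ) = p * ((Bp^(2*n)).mulVec y 2) := by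
      simp [smul_eq_mul]
    rw [this]
    push_cast
    rw [keyc 2, show ((vv1 2 : ℤ) : ℚ) = 0 by simp [vv1]]
    simp
  · show w4d (pr (p • ext5 y)) = 0
    rw [hpr, w4d_smul, hw, mul_zero]

private lemma hE2 (p : ℤ) (n : ℕ) : ∃ s, Phi s =
    ((0:↥(zOneOver 16)), ((⟨(p:ℚ)/(4:ℚ)^n, mem_zOneOver 4 p n⟩ : ↥(zOneOver 4)), 0),
      (0:ℤ)) := by
  obtain ⟨y, hy, hw⟩ := rec2 n
  refine ⟨Module.DirectLimit.of ℤ ℕ (fun _ : ℕ => Fin 5 → ℤ) f10 (n+1) (p • ext5 y), ?_⟩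
  rw [Phi]; refine (Module.DirectLimit.lift_of (g := fun n => (g n).toIntLinearMap) (Hg := Hg) _).trans ?_
  have hpr : pr (p • ext5 y) = p • y := by rw [pr_smul, pr_ext5]
  have key : ((2 * (4:ℤ)^n)) • ((Bp^(n+1)).mulVec y) = ((256:ℤ)^(n+1)) • vv2 := by
    rw [← Matrix.mulVec_smul, ← hy, Matrix.mulVec_mulVec, powBpBm,
      Matrix.smul_mulVec, Matrix.one_mulVec]
  have keyc : ∀ i, ((Bp^(n+1)).mulVec y i : ℚ)
      = (256:ℚ)^(n+1) * (vv2 i : ℚ) / (2 * (4:ℚ)^n) := by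
    intro i
    have h1 : (2 * (4:ℤ)^n) * ((Bp^(n+1)).mulVec y i) = (256:ℤ)^(n+1) * vv2 i := by
      have := congrFun key i
      simpa [smul_eq_mul] using this
    have hq : (2 * (4:ℚ)^n) ≠ 0 := by positivity
    rw [eq_div_iff hq]
    have := congrArg (fun t : ℤ => (t : ℚ)) h1
    push_cast at this
    linarith
  have h256 : (256:ℚ)^(n+1) = (4:ℚ)^(4*(n+1)) := by
    rw [show (256:ℚ) = 4^4 by norm_num, ← pow_mul]
  refine Prod.ext ?_ (Prod.ext (Prod.ext ?_ ?_) ?_)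
  · apply Subtype.ext
    show ((Bp^(n+1)).mulVec (pr (p • ext5 y)) 0 : ℚ) / (16:ℚ)^(2*(n+1)) = (0:ℚ)
    rw [hpr, Matrix.mulVec_smul,
      show ((p • (Bp^(n+1)).mulVec y) 0 : ℤ) = p * ((Bp^(n+1)).mulVec y 0) by simp [smul_eq_mul]]
    push_cast
    rw [keyc 0, show ((vv2 0 : ℤ) : ℚ) = 0 by simp [vv2]]
    simp
  · apply Subtype.ext
    show ((Bp^(n+1)).mulVec (pr (p • ext5 y)) 1 : ℚ) / (4:ℚ)^(4*(n+1)) = (p:ℚ)/(4:ℚ)^n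
    rw [hpr, Matrix.mulVec_smul,
      show ((p • (Bp^(n+1)).mulVec y) 1 : ℤ) = p * ((Bp^(n+1)).mulVec y 1) by simp [smul_eq_mul]]
    push_cast
    rw [keyc 1, h256, show ((vv2 1 : ℤ) : ℚ) = 2 by simp [vv2]]
    have h4a : ((4:ℚ)^(4*(n+1))) ≠ 0 := by positivity
    have h4b : ((4:ℚ)^n) ≠ 0 := by positivity
    field_simp
  · apply Subtype.ext
    show ((Bp^(n+1)).mulVec (pr (p • ext5 y)) 2 : ℚ) / (4:ℚ)^(4*(n+1)) = (0:ℚ)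
    rw [hpr, Matrix.mulVec_smul,
      show ((p • (Bp^(n+1)).mulVec y) 2 : ℤ) = p * ((Bp^(n+1)).mulVec y 2) by simp [smul_eq_mul]]
    push_cast
    rw [keyc 2, show ((vv2 2 : ℤ) : ℚ) = 0 by simp [vv2]]
    simp
  · show w4d (pr (p • ext5 y)) = 0
    rw [hpr, w4d_smul, hw, mul_zero]

private lemma hE3 (p : ℤ) (n : ℕ) : ∃ s, Phi s =
    ((0:↥(zOneOver 16)), ((0:↥(zOneOver 4)),
      (⟨(p:ℚ)/(4:ℚ)^n, mem_zOneOver 4 p n⟩ : ↥(zOneOver 4))), (0:ℤ)) := by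
  obtain ⟨y, hy, hw⟩ := rec3 n
  refine ⟨Module.DirectLimit.of ℤ ℕ (fun _ : ℕ => Fin 5 → ℤ) f10 n (p • ext5 y), ?_⟩
  rw [Phi]; refine (Module.DirectLimit.lift_of (g := fun n => (g n).toIntLinearMap) (Hg := Hg) _).trans ?_
  have hpr : pr (p • ext5 y) = p • y := by rw [pr_smul, pr_ext5]
  have key : (((4:ℤ)^n)) • ((Bp^n).mulVec y) = ((256:ℤ)^n) • vv3 := by
    rw [← Matrix.mulVec_smul, ← hy, Matrix.mulVec_mulVec, powBpBm,
      Matrix.smul_mulVec, Matrix.one_mulVec]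
  have keyc : ∀ i, ((Bp^n).mulVec y i : ℚ) = (256:ℚ)^n * (vv3 i : ℚ) / ((4:ℚ)^n) := by
    intro i
    have h1 : ((4:ℤ)^n) * ((Bp^n).mulVec y i) = (256:ℤ)^n * vv3 i := by
      have := congrFun key i
      simpa [smul_eq_mul] using this
    have hq : ((4:ℚ)^n) ≠ 0 := by positivity
    rw [eq_div_iff hq]
    have := congrArg (fun t : ℤ => (t : ℚ)) h1
    push_cast at this
    linarith
  have h256 : (256:ℚ)^n = (4:ℚ)^(4*n) := by
    rw [show (256:ℚ) = 4^4 by norm_num, ← pow_mul]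
  refine Prod.ext ?_ (Prod.ext (Prod.ext ?_ ?_) ?_)
  · apply Subtype.ext
    show ((Bp^n).mulVec (pr (p • ext5 y)) 0 : ℚ) / (16:ℚ)^(2*n) = (0:ℚ)
    rw [hpr, Matrix.mulVec_smul,
      show ((p • (Bp^n).mulVec y) 0 : ℤ) = p * ((Bp^n).mulVec y 0) by simp [smul_eq_mul]]
    push_cast
    rw [keyc 0, show ((vv3 0 : ℤ) : ℚ) = 0 by simp [vv3]]
    simp
  · apply Subtype.ext
    show ((Bp^n).mulVec (pr (p • ext5 y)) 1 : ℚ) / (4:ℚ)^(4*n) = (0:ℚ)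
    rw [hpr, Matrix.mulVec_smul,
      show ((p • (Bp^n).mulVec y) 1 : ℤ) = p * ((Bp^n).mulVec y 1) by simp [smul_eq_mul]]
    push_cast
    rw [keyc 1, show ((vv3 1 : ℤ) : ℚ) = 0 by simp [vv3]]
    simp
  · apply Subtype.ext
    show ((Bp^n).mulVec (pr (p • ext5 y)) 2 : ℚ) / (4:ℚ)^(4*n) = (p:ℚ)/(4:ℚ)^n
    rw [hpr, Matrix.mulVec_smul,
      show ((p • (Bp^n).mulVec y) 2 : ℤ) = p * ((Bp^n).mulVec y 2) by simp [smul_eq_mul]]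
    push_cast
    rw [keyc 2, h256, show ((vv3 2 : ℤ) : ℚ) = 1 by simp [vv3]]
    have h4a : ((4:ℚ)^(4*n)) ≠ 0 := by positivity
    have h4b : ((4:ℚ)^n) ≠ 0 := by positivity
    field_simp
  · show w4d (pr (p • ext5 y)) = 0
    rw [hpr, w4d_smul, hw, mul_zero]

private lemma hE4 : ∃ s, Phi s =
    ((0:↥(zOneOver 16)), ((0:↥(zOneOver 4)), (0:↥(zOneOver 4))), (1:ℤ)) := by
  refine ⟨Module.DirectLimit.of ℤ ℕ (fun _ : ℕ => Fin 5 → ℤ) f10 1 (ext5 ![-1,-3,-1,-3]), ?_⟩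
  rw [Phi]; refine (Module.DirectLimit.lift_of (g := fun n => (g n).toIntLinearMap) (Hg := Hg) _).trans ?_
  have hpr : pr (ext5 ![-1,-3,-1,-3]) = ![-1,-3,-1,-3] := pr_ext5 _
  have hBp : Bp.mulVec ![-1,-3,-1,-3] = ![0,0,0,-128] := by
    funext i; fin_cases i <;> decide
  refine Prod.ext ?_ (Prod.ext (Prod.ext ?_ ?_) ?_)
  · apply Subtype.ext
    show ((Bp^1).mulVec (pr (ext5 ![-1,-3,-1,-3])) 0 : ℚ) / (16:ℚ)^(2*1) = (0:ℚ)
    rw [hpr, pow_one, hBp]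
    norm_num
  · apply Subtype.ext
    show ((Bp^1).mulVec (pr (ext5 ![-1,-3,-1,-3])) 1 : ℚ) / (4:ℚ)^(4*1) = (0:ℚ)
    rw [hpr, pow_one, hBp]
    norm_num
  · apply Subtype.ext
    show ((Bp^1).mulVec (pr (ext5 ![-1,-3,-1,-3])) 2 : ℚ) / (4:ℚ)^(4*1) = (0:ℚ)
    rw [hpr, pow_one, hBp]
    norm_num
    rfl
  · show w4d (pr (ext5 ![-1,-3,-1,-3])) = 1
    rw [hpr]
    decide

private lemma phi_inj : Function.Injective Phi := by
  intro a b hab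
  have h : Phi (a - b) = 0 := by rw [map_sub, hab, sub_self]
  have := phi_zero h
  rwa [sub_eq_zero] at this

private lemma phi_surj : Function.Surjective Phi := by
  rintro ⟨a, ⟨b, c⟩, d⟩
  obtain ⟨p, n, hp⟩ := zOneOver_rep (by norm_num) a.2
  obtain ⟨q, m, hq⟩ := zOneOver_rep (by norm_num) b.2
  obtain ⟨r, k, hr⟩ := zOneOver_rep (by norm_num) c.2
  obtain ⟨s1, hs1⟩ := hE1 p n
  obtain ⟨s2, hs2⟩ := hE2 q m
  obtain ⟨s3, hs3⟩ := hE3 r k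
  obtain ⟨s4, hs4⟩ := hE4
  refine ⟨s1 + s2 + s3 + d • s4, ?_⟩
  rw [map_add, map_add, map_add, map_smul, hs1, hs2, hs3, hs4]
  refine Prod.ext ?_ (Prod.ext (Prod.ext ?_ ?_) ?_)
  · apply Subtype.ext
    simp [hp]
  · apply Subtype.ext
    simp [hq]
  · apply Subtype.ext
    simp [hr]
  · simp

/-- the direct limit of `ℤ⁵ →A ℤ⁵ →A ⋯` with `A = A₂*` is isomorphic
as an abelian group to `ℤ[1/16] ⊕ ℤ[1/4]² ⊕ ℤ`. -/
theorem stmt10 :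
    Nonempty ((Module.DirectLimit (fun _ : ℕ => Fin 5 → ℤ) f10) ≃+
      (zOneOver 16 × (zOneOver 4 × zOneOver 4) × ℤ)) := by
  exact ⟨AddEquiv.ofBijective Phi.toAddMonoidHom ⟨phi_inj, phi_surj⟩⟩
end
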